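/- Remainder bound for the sinc-quadrature asymptotics: let κ ∈ ℝ and A ∈ ℝ with A ≠ 0. Then | ∫_{−1}^{1} μ² exp(−i(κ/2)μ²) e^{iAμ} dμ | ≤ (4 + |κ|/2)/|A|. -/

import Mathlib

open Real

private lemma fresnel_aux_deriv (κ A : ℝ) (hA : A ≠ 0) (μ : ℝ) :
    HasDerivAt (fun μ : ℝ => ((μ : ℂ) ^ 2 * Complex.exp (-Complex.I * (κ / 2 : ℝ) * μ ^ 2) *
        Complex.exp (Complex.I * A * μ)) / (Complex.I * A))
      ((μ : ℂ) ^ 2 * Complex.exp (-Complex.I * (κ / 2 : ℝ) * μ ^ 2) *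
          Complex.exp (Complex.I * A * μ)
        + ((2 * μ - Complex.I * κ * μ ^ 3) * Complex.exp (-Complex.I * (κ / 2 : ℝ) * μ ^ 2) *
          Complex.exp (Complex.I * A * μ)) / (Complex.I * A)) μ := by
  have hc : (Complex.I * A : ℂ) ≠ 0 := by
    simp [Complex.ext_iff, Complex.I_ne_zero, hA]
  have hμ : HasDerivAt (fun μ : ℝ => (μ : ℂ)) 1 μ := Complex.ofRealCLM.hasDerivAt
  have hsq : HasDerivAt (fun μ : ℝ => (μ : ℂ) ^ 2) (2 * μ) μ := by
    have := hμ.fun_mul hμ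
    simp only [one_mul, mul_one] at this
    simpa [sq, two_mul] using this
  have hE1 : HasDerivAt (fun μ : ℝ => Complex.exp (-Complex.I * (κ / 2 : ℝ) * μ ^ 2))
      ((-Complex.I * κ * μ) * Complex.exp (-Complex.I * (κ / 2 : ℝ) * μ ^ 2)) μ := by
    have hin : HasDerivAt (fun μ : ℝ => -Complex.I * (κ / 2 : ℝ) * (μ : ℂ) ^ 2)
        (-Complex.I * (κ / 2 : ℝ) * (2 * μ)) μ := hsq.const_mul _
    have := hin.cexp
    convert this using 1
    push_cast
    ring
  have hE2 : HasDerivAt (fun μ : ℝ => Complex.exp (Complex.I * A * μ))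
      ((Complex.I * A) * Complex.exp (Complex.I * A * μ)) μ := by
    have hin : HasDerivAt (fun μ : ℝ => Complex.I * A * (μ : ℂ)) (Complex.I * A * 1) μ :=
      hμ.const_mul _
    have := hin.cexp
    convert this using 1
    ring
  have h := ((hsq.fun_mul hE1).fun_mul hE2).div_const (Complex.I * A)
  refine h.congr_deriv ?_
  field_simp
  linear_combination ((μ:ℂ) ^ 2 * Complex.I) * mul_inv_cancel₀ (Complex.ofReal_ne_zero.mpr hA)

theorem fresnel_phi_remainder_bound (κ A : ℝ) (hA : A ≠ 0) :
    ‖∫ μ in (-1:ℝ)..1,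
        (μ : ℂ) ^ 2 * Complex.exp (-Complex.I * (κ / 2 : ℝ) * μ ^ 2) *
          Complex.exp (Complex.I * A * μ)‖ ≤ (4 + |κ| / 2) / |A| := by
  have hc : (Complex.I * A : ℂ) ≠ 0 := by
    simp [Complex.ext_iff, Complex.I_ne_zero, hA]
  have habsc : ‖Complex.I * A‖ = |A| := by
    simp
  set f : ℝ → ℂ := fun μ => (μ : ℂ) ^ 2 * Complex.exp (-Complex.I * (κ / 2 : ℝ) * μ ^ 2) *
      Complex.exp (Complex.I * A * μ) with hf
  set g : ℝ → ℂ := fun μ => ((2 * μ - Complex.I * κ * μ ^ 3) *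
      Complex.exp (-Complex.I * (κ / 2 : ℝ) * μ ^ 2) *
      Complex.exp (Complex.I * A * μ)) / (Complex.I * A) with hg
  set F : ℝ → ℂ := fun μ => ((μ : ℂ) ^ 2 * Complex.exp (-Complex.I * (κ / 2 : ℝ) * μ ^ 2) *
      Complex.exp (Complex.I * A * μ)) / (Complex.I * A) with hF
  have hfc : Continuous f := by fun_prop
  have hgc : Continuous g := by fun_prop
  have hfint : IntervalIntegrable f MeasureTheory.volume (-1) 1 := hfc.intervalIntegrable _ _
  have hgint : IntervalIntegrable g MeasureTheory.volume (-1) 1 := hgc.intervalIntegrable _ _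
  have hFTC : ∫ μ in (-1:ℝ)..1, (f μ + g μ) = F 1 - F (-1) := by
    apply intervalIntegral.integral_eq_sub_of_hasDerivAt
    · intro μ _
      exact fresnel_aux_deriv κ A hA μ
    · exact (hfc.add hgc).intervalIntegrable _ _
  have hsplit : ∫ μ in (-1:ℝ)..1, f μ = (F 1 - F (-1)) - ∫ μ in (-1:ℝ)..1, g μ := by
    rw [← hFTC, intervalIntegral.integral_add hfint hgint]
    ring
  rw [hsplit]
  have habsF : ∀ μ : ℝ, ‖F μ‖ = μ ^ 2 / |A| := by
    intro μ
    have h1 : (-Complex.I * (κ / 2 : ℝ) * (μ:ℂ) ^ 2).re = 0 := by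
      simp [pow_two, Complex.mul_re, Complex.mul_im]
    have h2 : (Complex.I * A * (μ:ℂ)).re = 0 := by
      simp [Complex.mul_re, Complex.mul_im]
    simp only [hF, norm_div, norm_mul, habsc, Complex.norm_exp, h1, h2, Real.exp_zero, mul_one,
      norm_pow, Complex.norm_real, Real.norm_eq_abs, sq_abs]
  have hgbound : ‖∫ μ in (-1:ℝ)..1, g μ‖ ≤ (2 + |κ| / 2) / |A| := by
    have hbd : ∀ t ∈ Set.uIoc (-1:ℝ) 1, ‖g t‖ ≤ (2 * |t| + |κ| * |t| ^ 3) / |A| := by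
      intro t _
      simp only [hg]
      rw [norm_div, norm_mul, norm_mul]
      simp only [habsc, Complex.norm_exp]
      have h1 : (-Complex.I * (κ / 2 : ℝ) * (t:ℂ) ^ 2).re = 0 := by
        simp [pow_two, Complex.mul_re, Complex.mul_im]
      have h2 : (Complex.I * A * (t:ℂ)).re = 0 := by
        simp [Complex.mul_re, Complex.mul_im]
      rw [h1, h2]
      simp only [Real.exp_zero, mul_one]
      gcongr
      calc ‖2 * t - Complex.I * κ * t ^ 3‖
          ≤ ‖2 * (t:ℂ)‖ + ‖Complex.I * κ * t ^ 3‖ :=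
            norm_sub_le _ _
        _ = 2 * |t| + |κ| * |t| ^ 3 := by
            simp [abs_pow]
    have hbint : IntervalIntegrable (fun t => (2 * |t| + |κ| * |t| ^ 3) / |A|)
        MeasureTheory.volume (-1) 1 := by
      apply Continuous.intervalIntegrable
      fun_prop
    have hle := intervalIntegral.norm_integral_le_of_norm_le
      (μ := MeasureTheory.volume) (a := (-1:ℝ)) (b := 1) (f := g)
      (by norm_num) (MeasureTheory.ae_of_all _ (fun t ht => hbd t (by rw [Set.uIoc_of_le (by norm_num)]; exact ht))) hbint
    have h2 : (∫ t in (0:ℝ)..1, (2 * t + |κ| * t ^ 3)) = 1 + |κ| / 4 := by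
      rw [intervalIntegral.integral_add (by apply Continuous.intervalIntegrable; fun_prop)
        (by apply Continuous.intervalIntegrable; fun_prop),
        intervalIntegral.integral_const_mul, intervalIntegral.integral_const_mul]
      simp [integral_pow]
      ring
    have hval : (∫ t in (-1:ℝ)..1, (2 * |t| + |κ| * |t| ^ 3) / |A|) = (2 + |κ| / 2) / |A| := by
      rw [intervalIntegral.integral_div]
      congr 1
      rw [← intervalIntegral.integral_add_adjacent_intervals (a := (-1:ℝ)) (b := 0) (c := 1)
        (by apply Continuous.intervalIntegrable; fun_prop)
        (by apply Continuous.intervalIntegrable; fun_prop)]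
      have hleft : (∫ t in (-1:ℝ)..0, (2 * |t| + |κ| * |t| ^ 3)) =
          ∫ t in (-1:ℝ)..0, (fun x => 2 * x + |κ| * x ^ 3) (-t) := by
        apply intervalIntegral.integral_congr
        intro t ht
        rw [Set.uIcc_of_le (by norm_num)] at ht
        simp only [abs_of_nonpos ht.2]
      have hright : (∫ t in (0:ℝ)..1, (2 * |t| + |κ| * |t| ^ 3)) =
          ∫ t in (0:ℝ)..1, (2 * t + |κ| * t ^ 3) := by
        apply intervalIntegral.integral_congr
        intro t ht
        rw [Set.uIcc_of_le (by norm_num)] at ht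
        simp only [abs_of_nonneg ht.1]
      rw [hleft, hright, intervalIntegral.integral_comp_neg (fun x => 2 * x + |κ| * x ^ 3)]
      norm_num [h2]
      ring
    rw [hval] at hle
    simpa using hle
  have e1 : ‖(F 1 - F (-1)) - ∫ μ in (-1:ℝ)..1, g μ‖
      ≤ ‖F 1 - F (-1)‖ + ‖∫ μ in (-1:ℝ)..1, g μ‖ :=
    norm_sub_le _ _
  have e2 : ‖F 1 - F (-1)‖ ≤ ‖F 1‖ + ‖F (-1)‖ :=
    norm_sub_le _ _
  have e3 : ‖F 1‖ = 1 / |A| := by rw [habsF 1]; norm_num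
  have e4 : ‖F (-1)‖ = 1 / |A| := by rw [habsF (-1)]; norm_num
  have hApos : (0:ℝ) < |A| := abs_pos.mpr hA
  have hsum : (1:ℝ) / |A| + 1 / |A| + (2 + |κ| / 2) / |A| = (4 + |κ| / 2) / |A| := by
    field_simp
    ring
  rw [e3, e4] at e2
  linarith
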